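/- arXiv:2403.06368 — 5 statements merged into one kernel-verified Lean document; each statement's English description precedes it below -/
import Mathlib

section
/- Suppose E[H^s | X, R] = E[H^o | X, R] + g(X, R) + R·λ where g(X, R) = (1-R)·g0(X) + R·g1(X) and the one-sided limits of g0 from the left and g1 from the right at x* are equal. Then the 'difference-in-differences' quantity {lim_{δ→0} E[H^s | X=x*+δ, R=1] − lim_{δ→0} E[H^s | X=x*-δ, R=0]} − {lim_{δ→0} E[H^o | X=x*+δ, R=1] − lim_{δ→0} E[H^o | X=x*-δ, R=0]} equals λ, provided the one-sided limits of E[H^o | X, R] at x* (from the right with R=1 and from the left with R=0) exist. -/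
open Filter Topology

/-- Proposition 2: With `E[H^s | X=x, R] = E[H^o | X=x, R] + g(x,R) + R·λ`,
`g(x,R) = (1-R)·g0(x) + R·g1(x)`, `R = 1{x > x*}`, equal one-sided limits of `g0` (left) and `g1`
(right) at `x*`, and existing one-sided limits of `E[H^o | X, R]` at `x*`, the
difference-in-differences quantity — the jump in subjective health minus the jump in objective
health at `x*` — equals `λ`. -/
theorem justification_bias_identified_by_did
    (g0 g1 EHo EHs : ℝ → ℝ) (xstar Lg lam Ao Bo : ℝ)
    (hg0 : Tendsto g0 (𝓝[<] xstar) (𝓝 Lg))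
    (hg1 : Tendsto g1 (𝓝[>] xstar) (𝓝 Lg))
    (hAo : Tendsto EHo (𝓝[>] xstar) (𝓝 Ao))
    (hBo : Tendsto EHo (𝓝[<] xstar) (𝓝 Bo))
    (hEHs : ∀ x, EHs x = EHo x + (if xstar < x then g1 x + lam else g0 x)) :
    ∃ As Bs : ℝ,
      Tendsto EHs (𝓝[>] xstar) (𝓝 As) ∧
      Tendsto EHs (𝓝[<] xstar) (𝓝 Bs) ∧
      (As - Bs) - (Ao - Bo) = lam := by
  refine ⟨Ao + (Lg + lam), Bo + Lg, ?_, ?_, by ring⟩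
  · have h : EHs =ᶠ[𝓝[>] xstar] fun x => EHo x + (g1 x + lam) := by
      filter_upwards [self_mem_nhdsWithin] with x hx
      rw [hEHs x, if_pos (Set.mem_Ioi.mp hx)]
    exact Tendsto.congr' h.symm (hAo.add (hg1.add tendsto_const_nhds))
  · have h : EHs =ᶠ[𝓝[<] xstar] fun x => EHo x + g0 x := by
      filter_upwards [self_mem_nhdsWithin] with x hx
      rw [hEHs x, if_neg (not_lt.mpr (le_of_lt (Set.mem_Iio.mp hx)))]
    exact Tendsto.congr' h.symm (hBo.add hg0)
end

section
/- In the three-type mixture model around the statutory retirement age m*, the discontinuity of the population conditional expectation of reported health at m* equals λ·P^C, where P^C is the probability mass of compliers. Consequently, if P^C > 0, then λ equals the discontinuity divided by P^C. -/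
open Filter Topology

/-- Proposition 3: In the three-type mixture model around the statutory retirement
age `m*`, with never-takers' CEF `f0`, always-takers' CEF `f1 + λ`, and compliers' CEF switching
from `f0` to `f1 + λ` at `m*`, where `f0, f1` are continuous at `m*` with common (one-sided)
limit `L`, the discontinuity of the population conditional expectation of reported health at `m*`
equals `λ·P^C`; consequently, if `P^C > 0`, then `λ` equals the discontinuity divided by `P^C`. -/
theorem justification_bias_statutory_age_mixture
    (f0 f1 : ℝ → ℝ) (mstar L lam PN PA PC : ℝ)
    (hPN : 0 ≤ PN) (hPA : 0 ≤ PA) (hPC : 0 ≤ PC)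
    (hsum : PN + PA + PC = 1)
    (hc0 : ContinuousAt f0 mstar) (hc1 : ContinuousAt f1 mstar)
    (h0 : f0 mstar = L) (h1 : f1 mstar = L)
    (EHs : ℝ → ℝ)
    (hEHs : ∀ x, EHs x =
      PN * f0 x + PA * (f1 x + lam) +
        PC * (if mstar < x then f1 x + lam else f0 x)) :
    ∃ A B : ℝ,
      Tendsto EHs (𝓝[>] mstar) (𝓝 A) ∧
      Tendsto EHs (𝓝[<] mstar) (𝓝 B) ∧
      A - B = lam * PC ∧
      (0 < PC → lam = (A - B) / PC) := by
  have t0r : Tendsto f0 (𝓝[>] mstar) (𝓝 L) := h0 ▸ (hc0.continuousWithinAt (s := Set.Ioi mstar))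
  have t1r : Tendsto f1 (𝓝[>] mstar) (𝓝 L) := h1 ▸ (hc1.continuousWithinAt (s := Set.Ioi mstar))
  have t0l : Tendsto f0 (𝓝[<] mstar) (𝓝 L) := h0 ▸ (hc0.continuousWithinAt (s := Set.Iio mstar))
  have t1l : Tendsto f1 (𝓝[<] mstar) (𝓝 L) := h1 ▸ (hc1.continuousWithinAt (s := Set.Iio mstar))
  refine ⟨PN * L + PA * (L + lam) + PC * (L + lam),
          PN * L + PA * (L + lam) + PC * L, ?_, ?_, by ring, ?_⟩
  · have ht : Tendsto (fun x => PN * f0 x + PA * (f1 x + lam) + PC * (f1 x + lam))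
        (𝓝[>] mstar) (𝓝 (PN * L + PA * (L + lam) + PC * (L + lam))) :=
      ((((tendsto_const_nhds.mul t0r)).add
        (tendsto_const_nhds.mul (t1r.add tendsto_const_nhds))).add
        (tendsto_const_nhds.mul (t1r.add tendsto_const_nhds)))
    refine ht.congr' ?_
    filter_upwards [self_mem_nhdsWithin] with x hx
    simp [hEHs x, hx.out]
  · have ht : Tendsto (fun x => PN * f0 x + PA * (f1 x + lam) + PC * f0 x)
        (𝓝[<] mstar) (𝓝 (PN * L + PA * (L + lam) + PC * L)) :=
      ((((tendsto_const_nhds.mul t0l)).add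
        (tendsto_const_nhds.mul (t1l.add tendsto_const_nhds))).add
        (tendsto_const_nhds.mul t0l))
    refine ht.congr' ?_
    filter_upwards [self_mem_nhdsWithin] with x hx
    simp [hEHs x, not_lt.mpr (le_of_lt hx.out)]
  · intro hPCpos
    field_simp
    ring
end

section
/- In the three-type mixture model, if λ > 0 and P^C > 0, then the population conditional expectation of reported health E[H^s | X] has a strictly positive jump discontinuity at m*; conversely, if λ = 0 and f0, f1 have equal one-sided limits at m*, then E[H^s | X] is continuous at m* (its one-sided limits at m* agree), regardless of the type proportions. -/
open Filter Topology

/-- In the three-type mixture model, if `λ > 0` and `P^C > 0`, then the population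
conditional expectation of reported health has a strictly positive jump at `m*`; conversely, if
`λ = 0` (with `f0, f1` continuous at `m*` and having equal one-sided limits there), then the
population conditional expectation is continuous at `m*` — its one-sided limits agree —
regardless of the type proportions. -/
theorem mixture_jump_positive_iff_bias
    (f0 f1 : ℝ → ℝ) (mstar L lam PN PA PC : ℝ)
    (hPN : 0 ≤ PN) (hPA : 0 ≤ PA) (hPC : 0 ≤ PC)
    (hsum : PN + PA + PC = 1)
    (hc0 : ContinuousAt f0 mstar) (hc1 : ContinuousAt f1 mstar)
    (h0 : f0 mstar = L) (h1 : f1 mstar = L)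
    (EHs : ℝ → ℝ)
    (hEHs : ∀ x, EHs x =
      PN * f0 x + PA * (f1 x + lam) +
        PC * (if mstar < x then f1 x + lam else f0 x)) :
    (0 < lam → 0 < PC →
      ∃ A B : ℝ,
        Tendsto EHs (𝓝[>] mstar) (𝓝 A) ∧
        Tendsto EHs (𝓝[<] mstar) (𝓝 B) ∧
        0 < A - B) ∧
    (lam = 0 →
      ∃ A : ℝ,
        Tendsto EHs (𝓝[>] mstar) (𝓝 A) ∧
        Tendsto EHs (𝓝[<] mstar) (𝓝 A)) := by
  have hg : ContinuousAt (fun x => PN * f0 x + PA * (f1 x + lam) + PC * (f1 x + lam))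
      mstar := by fun_prop
  have hh : ContinuousAt (fun x => PN * f0 x + PA * (f1 x + lam) + PC * f0 x)
      mstar := by fun_prop
  have hR : Tendsto EHs (𝓝[>] mstar) (𝓝 (PN * L + PA * (L + lam) + PC * (L + lam))) := by
    have h := hg.tendsto.mono_left (nhdsWithin_le_nhds (s := Set.Ioi mstar))
    rw [h0, h1] at h
    refine h.congr' ?_
    filter_upwards [self_mem_nhdsWithin] with x hx
    exact (by rw [hEHs x, if_pos (Set.mem_Ioi.mp hx)] : EHs x = _).symm
  have hL : Tendsto EHs (𝓝[<] mstar) (𝓝 (PN * L + PA * (L + lam) + PC * L)) := by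
    have h := hh.tendsto.mono_left (nhdsWithin_le_nhds (s := Set.Iio mstar))
    rw [h0, h1] at h
    refine h.congr' ?_
    filter_upwards [self_mem_nhdsWithin] with x hx
    exact (by rw [hEHs x, if_neg (not_lt.mpr (le_of_lt (Set.mem_Iio.mp hx)))] : EHs x = _).symm
  constructor
  · intro hlam hPCpos
    exact ⟨_, _, hR, hL, by nlinarith⟩
  · intro hlam
    subst hlam
    exact ⟨_, hR, by simpa using hL⟩
end

section
/- In the population regression of R on H^s, if Cov(e, ε) ≥ 0 (justification bias is nonnegative) and θ_H > 0, then the OLS estimand β satisfies β ≤ θ_H + Cov(e, ε)/Var(H^s); moreover β ≥ θ_H·Var(H)/Var(H^s) > 0, so the OLS estimand remains strictly positive despite measurement error. -/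
open MeasureTheory

/-- Population covariance of two real random variables. -/
noncomputable def cov {Ω : Type*} [MeasurableSpace Ω] (μ : Measure Ω) (X Y : Ω → ℝ) : ℝ :=
  ∫ ω, (X ω - ∫ ω', X ω' ∂μ) * (Y ω - ∫ ω', Y ω' ∂μ) ∂μ

section Aux
variable {Ω : Type*} [MeasurableSpace Ω] (μ : Measure Ω) [IsProbabilityMeasure μ]
variable {X Y Z : Ω → ℝ}

omit [IsProbabilityMeasure μ] in
lemma intmul (hX : MemLp X 2 μ) (hY : MemLp Y 2 μ) :
    Integrable (fun ω => X ω * Y ω) μ := by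
  have h := (((hX.add hY).integrable_sq).sub hX.integrable_sq).sub hY.integrable_sq
  have := h.div_const 2
  refine this.congr (Filter.Eventually.of_forall fun ω => ?_)
  simp only [Pi.sub_apply, Pi.add_apply]
  ring

lemma memc (hX : MemLp X 2 μ) (c : ℝ) : MemLp (fun ω => X ω - c) 2 μ :=
  hX.sub (memLp_const c)

lemma cov_add_left (hX : MemLp X 2 μ) (hY : MemLp Y 2 μ) (hZ : MemLp Z 2 μ) :
    cov μ (fun ω => X ω + Y ω) Z = cov μ X Z + cov μ Y Z := by
  unfold cov
  rw [integral_add (hX.integrable one_le_two) (hY.integrable one_le_two),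
    ← integral_add (intmul μ (memc μ hX _) (memc μ hZ _)) (intmul μ (memc μ hY _) (memc μ hZ _))]
  congr 1; funext ω; ring

omit [IsProbabilityMeasure μ] in
lemma cov_comm : cov μ X Y = cov μ Y X := by
  unfold cov
  exact integral_congr_ae (Filter.Eventually.of_forall fun ω => mul_comm _ _)

lemma cov_add_right (hX : MemLp X 2 μ) (hY : MemLp Y 2 μ) (hZ : MemLp Z 2 μ) :
    cov μ Z (fun ω => X ω + Y ω) = cov μ Z X + cov μ Z Y := by
  rw [cov_comm μ, cov_add_left μ hX hY hZ, cov_comm μ, cov_comm μ (X := Y)]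

omit [IsProbabilityMeasure μ] in
lemma cov_smul_left (c : ℝ) : cov μ (fun ω => c * X ω) Y = c * cov μ X Y := by
  unfold cov
  rw [show (∫ ω', (fun ω => c * X ω) ω' ∂μ) = c * ∫ ω', X ω' ∂μ from integral_const_mul c X,
    ← integral_const_mul c (fun ω => (X ω - ∫ ω', X ω' ∂μ) * (Y ω - ∫ ω', Y ω' ∂μ))]
  exact integral_congr_ae (Filter.Eventually.of_forall fun ω => by ring)

lemma cov_const_left (c : ℝ) : cov μ (fun _ => c) Y = 0 := by
  unfold cov
  simp

omit [IsProbabilityMeasure μ] in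
lemma cov_self_nonneg : 0 ≤ cov μ X X :=
  integral_nonneg fun _ => mul_self_nonneg _

end Aux

/-- In the population regression of `R` on `H^s`, if `Cov(e,ε) ≥ 0` and `θH > 0`,
then the OLS estimand `β = Cov(R,H^s)/Var(H^s)` satisfies
`β ≤ θH + Cov(e,ε)/Var(H^s)` and `β ≥ θH·Var(H)/Var(H^s) > 0`; in particular the OLS estimand
remains strictly positive despite measurement error. -/
theorem ols_bounds_with_nonnegative_bias
    {Ω : Type*} [MeasurableSpace Ω] (μ : Measure Ω) [IsProbabilityMeasure μ]
    (H ν ε e : Ω → ℝ) (θ0 θH : ℝ)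
    (hH : MemLp H 2 μ) (hν : MemLp ν 2 μ) (hε : MemLp ε 2 μ) (he : MemLp e 2 μ)
    (R Hs : Ω → ℝ)
    (hR : ∀ ω, R ω = θ0 + θH * H ω + e ω)
    (hHs : ∀ ω, Hs ω = H ω + ν ω + ε ω)
    (hHν : cov μ H ν = 0) (hHε : cov μ H ε = 0) (hνε : cov μ ν ε = 0)
    (heH : cov μ e H = 0) (heν : cov μ e ν = 0)
    (heε : 0 ≤ cov μ e ε)
    (hVarH : 0 < cov μ H H)
    (hθH : 0 < θH)
    (β : ℝ) (hβ : β = cov μ R Hs / cov μ Hs Hs) :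
    β ≤ θH + cov μ e ε / cov μ Hs Hs ∧
    θH * cov μ H H / cov μ Hs Hs ≤ β ∧
    0 < θH * cov μ H H / cov μ Hs Hs ∧
    0 < β := by
  have hfR : R = fun ω => θ0 + θH * H ω + e ω := funext hR
  have hfHs : Hs = fun ω => H ω + ν ω + ε ω := funext hHs
  have hθHH : MemLp (fun ω => θH * H ω) 2 μ := hH.const_mul θH
  have hA : MemLp (fun ω => θ0 + θH * H ω) 2 μ := (memLp_const θ0).add hθHH
  have hHν2 : MemLp (fun ω => H ω + ν ω) 2 μ := hH.add hν
  have hS : MemLp (fun ω => H ω + ν ω + ε ω) 2 μ := hHν2.add hε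
  -- expand cov with Hs on the right for any L2 variable
  have expand : ∀ (Z : Ω → ℝ), MemLp Z 2 μ →
      cov μ Z (fun ω => H ω + ν ω + ε ω) = cov μ Z H + cov μ Z ν + cov μ Z ε := by
    intro Z hZ
    rw [cov_add_right μ hHν2 hε hZ, cov_add_right μ hH hν hZ]
  have e1 : cov μ R Hs = θH * cov μ H H + cov μ e ε := by
    rw [hfR, hfHs, cov_add_left μ hA he hS, cov_add_left μ (memLp_const θ0) hθHH hS,
      cov_const_left, cov_smul_left, expand H hH, expand e he, hHν, hHε, heH, heν]
    ring
  have e2 : cov μ Hs Hs = cov μ H H + cov μ ν ν + cov μ ε ε := by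
    rw [hfHs, cov_add_left μ hHν2 hε hS, cov_add_left μ hH hν hS,
      expand H hH, expand ν hν, expand ε hε, hHν, hHε, hνε,
      cov_comm μ (X := ν) (Y := H), hHν, cov_comm μ (X := ε) (Y := H), hHε,
      cov_comm μ (X := ε) (Y := ν), hνε]
    ring
  have hbν : 0 ≤ cov μ ν ν := cov_self_nonneg μ
  have hbε : 0 ≤ cov μ ε ε := cov_self_nonneg μ
  have hD : 0 < cov μ Hs Hs := by rw [e2]; linarith
  have h3 : 0 < θH * cov μ H H / cov μ Hs Hs :=
    div_pos (mul_pos hθH hVarH) hD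
  have h2 : θH * cov μ H H / cov μ Hs Hs ≤ β := by
    rw [hβ, e1]
    exact div_le_div_of_nonneg_right (by linarith) hD.le
  have h1 : β ≤ θH + cov μ e ε / cov μ Hs Hs := by
    rw [hβ, e1, show θH + cov μ e ε / cov μ Hs Hs
        = (θH * cov μ Hs Hs + cov μ e ε) / cov μ Hs Hs by field_simp]
    apply div_le_div_of_nonneg_right ?_ hD.le
    nlinarith [e2]
  exact ⟨h1, h2, h3, h3.trans_le h2⟩
end

section
/- If in the three-type mixture model the observed discontinuity of E[H^s | X] at m* is D and the observed discontinuity of E[R | X] at m* is P^C (the complier share), with complier retirement behavior R = 1{X > m*} for compliers, R = 0 for never-takers, R = 1 for always-takers, then D / (discontinuity of E[R | X]) = λ whenever P^C > 0. -/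
open Filter Topology

/-- fuzzy-RD / Wald ratio: In the three-type mixture model with never-takers
(`R ≡ 0`), always-takers (`R ≡ 1`) and compliers (`R = 1{X > m*}`), the conditional retirement
probability is `E[R | X=x] = P^A` for `x < m*` and `P^A + P^C` for `x > m*`, so its discontinuity
at `m*` is `P^C`. If `P^C > 0`, the ratio of the discontinuity of `E[H^s | X]` to the
discontinuity of `E[R | X]` at `m*` equals `λ`. -/
theorem fuzzy_rd_ratio_identifies_bias
    (f0 f1 : ℝ → ℝ) (mstar L lam PN PA PC : ℝ)
    (hPN : 0 ≤ PN) (hPA : 0 ≤ PA) (hPC : 0 < PC)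
    (hsum : PN + PA + PC = 1)
    (hc0 : ContinuousAt f0 mstar) (hc1 : ContinuousAt f1 mstar)
    (h0 : f0 mstar = L) (h1 : f1 mstar = L)
    (EHs ER : ℝ → ℝ)
    (hEHs : ∀ x, EHs x =
      PN * f0 x + PA * (f1 x + lam) +
        PC * (if mstar < x then f1 x + lam else f0 x))
    (hER : ∀ x, ER x = if mstar < x then PA + PC else PA) :
    ∃ A B RA RB : ℝ,
      Tendsto EHs (𝓝[>] mstar) (𝓝 A) ∧
      Tendsto EHs (𝓝[<] mstar) (𝓝 B) ∧
      Tendsto ER (𝓝[>] mstar) (𝓝 RA) ∧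
      Tendsto ER (𝓝[<] mstar) (𝓝 RB) ∧
      RA - RB = PC ∧
      (A - B) / (RA - RB) = lam := by

  refine ⟨PN * L + PA * (L + lam) + PC * (L + lam),
          PN * L + PA * (L + lam) + PC * L,
          PA + PC, PA, ?_, ?_, ?_, ?_, by ring, ?_⟩
  · have h : Tendsto (fun x => PN * f0 x + PA * (f1 x + lam) + PC * (f1 x + lam))
        (𝓝[>] mstar) (𝓝 (PN * L + PA * (L + lam) + PC * (L + lam))) := by
      have := ((hc0.tendsto.const_mul PN).add
        (((hc1.tendsto.add_const lam).const_mul PA))).add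
        ((hc1.tendsto.add_const lam).const_mul PC)
      simpa [h0, h1] using this.mono_left nhdsWithin_le_nhds
    refine h.congr' ?_
    filter_upwards [self_mem_nhdsWithin] with x hx
    have hx' : mstar < x := hx
    simp [hEHs, hx']
  · have h : Tendsto (fun x => PN * f0 x + PA * (f1 x + lam) + PC * f0 x)
        (𝓝[<] mstar) (𝓝 (PN * L + PA * (L + lam) + PC * L)) := by
      have := ((hc0.tendsto.const_mul PN).add
        (((hc1.tendsto.add_const lam).const_mul PA))).add
        (hc0.tendsto.const_mul PC)
      simpa [h0, h1] using this.mono_left nhdsWithin_le_nhds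
    refine h.congr' ?_
    filter_upwards [self_mem_nhdsWithin] with x hx
    have hx' : x < mstar := hx
    simp [hEHs, not_lt.mpr hx'.le]
  · refine tendsto_const_nhds.congr' ?_
    filter_upwards [self_mem_nhdsWithin] with x hx
    have hx' : mstar < x := hx
    simp [hER, hx']
  · refine tendsto_const_nhds.congr' ?_
    filter_upwards [self_mem_nhdsWithin] with x hx
    have hx' : x < mstar := hx
    simp [hER, not_lt.mpr hx'.le]
  · field_simp
    rw [show PA + PC - PA = PC by ring, div_eq_iff hPC.ne']
    ring
end
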